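/- Let σ ∈ S_k correspond to an Eulerian trail of a digraph G containing two edge-disjoint parallel subtrails q_1 and q_2 (same start and end vertices), with h edges of the trail strictly between q_1 and q_2. Then the permutation σ^{q_1↔q_2} obtained by swapping the two subtrails satisfies sgn(σ^{q_1↔q_2}) = (-1)^{|q_1|(h+|q_2|) + h|q_2|} · sgn(σ), where |q| denotes the number of edges of the trail q. -/
import Mathlib


open scoped Classical

noncomputable section

/-- The permutation `σ_M ∈ S_{|M|}` induced by the relative order of `σ` on `M`. -/
def sigmaMPerm {k : ℕ} (σ : Equiv.Perm (Fin k)) (M : Finset (Fin k)) :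
    Equiv.Perm (Fin M.card) :=
  (M.orderIsoOfFin rfl).toEquiv.trans
    ((σ.subtypeEquiv (fun a =>
        ⟨fun h => Finset.mem_image_of_mem _ h, fun h => by
          obtain ⟨b, hb, hba⟩ := Finset.mem_image.mp h
          rwa [← σ.injective hba]⟩)).trans
      ((M.image ⇑σ).orderIsoOfFin
        (Finset.card_image_of_injective M σ.injective)).toEquiv.symm)

/-- `(a_{σ(0)},…,a_{σ(k-1)})` is a directed Eulerian trail from `s` to `t`. -/
def IsEulerianTrail {V : Type*} {k : ℕ} (src tgt : Fin k → V) (s t : V)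
    (σ : Equiv.Perm (Fin k)) : Prop :=
  (∀ h0 : 0 < k, src (σ ⟨0, h0⟩) = s ∧ tgt (σ ⟨k - 1, Nat.sub_lt h0 Nat.one_pos⟩) = t) ∧
  ∀ (j : ℕ) (hj : j + 1 < k), src (σ ⟨j + 1, hj⟩) = tgt (σ ⟨j, Nat.lt_of_succ_lt hj⟩)

/-- The signed sum `S(G,B) = Σ_{σ ∈ P(G)} sgn(σ)·sgn(σ_{M(B)})`. -/
def SGB {V : Type*} {k : ℕ} (src tgt : Fin k → V) (s t : V) (B : Finset (Fin k)) : ℤ :=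
  ∑ σ : Equiv.Perm (Fin k),
    if IsEulerianTrail src tgt s t σ then
      (Equiv.Perm.sign σ : ℤ) * (Equiv.Perm.sign (sigmaMPerm σ B) : ℤ)
    else 0

/-- The standard polynomial `s_k` evaluated at `x`. -/
def sPoly {A : Type*} [Ring A] {k : ℕ} (x : Fin k → A) : A :=
  ∑ π : Equiv.Perm (Fin k), (Equiv.Perm.sign π : ℤ) • (List.ofFn fun i => x (π i)).prod

/-- `q` occurs as a (contiguous) subtrail of the Eulerian trail given by `σ`. -/
def ContainsSubtrail {k l : ℕ} (σ : Equiv.Perm (Fin k)) (q : Fin l → Fin k) : Prop :=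
  ∃ p : ℕ, ∃ _hp : p + l ≤ k, ∀ d : Fin l, σ ⟨p + d, by have := d.isLt; omega⟩ = q d

/-! ### Auxiliary machinery: local permutations and rotations -/

def intervalEquiv (k p L : ℕ) (h : p + L ≤ k) :
    Fin L ≃ {x : Fin k // p ≤ x.val ∧ x.val < p + L} where
  toFun x := ⟨⟨p + x.val, by have := x.isLt; omega⟩, by
    exact ⟨by simp, by simpa using x.isLt⟩⟩
  invFun y := ⟨y.val.val - p, by have := y.property; omega⟩
  left_inv x := by ext; simp
  right_inv y := by ext; have := y.property; simp; omega

noncomputable def localPerm {k : ℕ} (p L : ℕ) (h : p + L ≤ k) (e : Equiv.Perm (Fin L)) :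
    Equiv.Perm (Fin k) :=
  e.extendDomain (intervalEquiv k p L h)

lemma localPerm_apply_out {k : ℕ} {p L : ℕ} (h : p + L ≤ k) (e : Equiv.Perm (Fin L))
    (x : Fin k) (hx : x.val < p ∨ p + L ≤ x.val) : localPerm p L h e x = x := by
  apply Equiv.Perm.extendDomain_apply_not_subtype
  omega

lemma localPerm_val_in {k : ℕ} {p L : ℕ} (h : p + L ≤ k) (e : Equiv.Perm (Fin L))
    (x : Fin k) (hx1 : p ≤ x.val) (hx2 : x.val < p + L) :
    (localPerm p L h e x).val = p + (e ⟨x.val - p, by omega⟩).val := by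
  have hfa : ((intervalEquiv k p L h ⟨x.val - p, by omega⟩ : Subtype _) : Fin k) = x := by
    apply Fin.ext; simp [intervalEquiv]; omega
  rw [localPerm]
  conv_lhs => rw [← hfa]
  rw [Equiv.Perm.extendDomain_apply_image]
  rfl

lemma localPerm_sign {k : ℕ} {p L : ℕ} (h : p + L ≤ k) (e : Equiv.Perm (Fin L)) :
    Equiv.Perm.sign (localPerm p L h e) = Equiv.Perm.sign e := by
  rw [localPerm, Equiv.Perm.sign_extendDomain]

lemma rot_val (L n : ℕ) (hL : 0 < L) (y : Fin L) :
    ((finRotate L ^ n) y).val = (y.val + n) % L := by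
  obtain ⟨m, rfl⟩ := Nat.exists_eq_succ_of_ne_zero hL.ne'
  induction n with
  | zero => simp [Nat.mod_eq_of_lt y.isLt]
  | succ n ih =>
    rw [pow_succ', Equiv.Perm.mul_apply, finRotate_succ_apply, Fin.val_add, ih, Fin.val_one',
      ← Nat.add_mod, Nat.add_assoc]

lemma rot_sign (L n : ℕ) (hL : 0 < L) :
    Equiv.Perm.sign (finRotate L ^ n) = (-1) ^ ((L - 1) * n) := by
  obtain ⟨m, rfl⟩ := Nat.exists_eq_succ_of_ne_zero hL.ne'
  rw [map_pow, sign_finRotate, ← pow_mul, Nat.succ_sub_one]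

lemma neg_one_pow_eq_of_even_add {m n : ℕ} (h : Even (m + n)) :
    ((-1 : ℤ)) ^ m = (-1) ^ n := by
  rcases Nat.even_or_odd m with hm | hm
  · rw [hm.neg_one_pow, ((Nat.even_add.mp h).mp hm).neg_one_pow]
  · have hn : Odd n := by
      rcases Nat.even_or_odd n with h' | h'
      · exact absurd ((Nat.even_add.mp h).mpr h') (Nat.not_even_iff_odd.mpr hm)
      · exact h'
    rw [hm.neg_one_pow, hn.neg_one_pow]

lemma aux_sign_three_blocks {k : ℕ} (σ σ' : Equiv.Perm (Fin k)) (i a b c : ℕ)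
    (ha : 0 < a) (hc : 0 < c) (hk : i + a + b + c ≤ k)
    (H0 : ∀ x : Fin k, x.val < i ∨ i + a + b + c ≤ x.val → σ' x = σ x)
    (H1 : ∀ x : Fin k, (hx1 : i ≤ x.val) → (hx2 : x.val < i + c) → σ' x = σ ⟨x.val + a + b, by omega⟩)
    (H2 : ∀ x : Fin k, (hx1 : i + c ≤ x.val) → (hx2 : x.val < i + c + b) → σ' x = σ ⟨x.val + a - c, by omega⟩)
    (H3 : ∀ x : Fin k, i + c + b ≤ x.val → x.val < i + a + b + c →
      σ' x = σ ⟨x.val - (b + c), lt_of_le_of_lt (Nat.sub_le _ _) x.isLt⟩) :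
    (Equiv.Perm.sign σ' : ℤ) = (-1) ^ (a * (b + c) + b * c) * (Equiv.Perm.sign σ : ℤ) := by
  have hL : 0 < a + b + c := by omega
  have hB : 0 < b + c := by omega
  have hkL : i + (a + b + c) ≤ k := by omega
  have hkB : i + (b + c) ≤ k := by omega
  set p1 : Equiv.Perm (Fin k) := localPerm i (a + b + c) hkL (finRotate (a + b + c) ^ a)
    with hp1
  set p2 : Equiv.Perm (Fin k) := localPerm i (b + c) hkB (finRotate (b + c) ^ b) with hp2
  have key : σ' = σ * p1 * p2 := by
    ext x
    simp only [Equiv.Perm.mul_apply]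
    rcases (by omega : x.val < i ∨ i + a + b + c ≤ x.val ∨ (i ≤ x.val ∧ x.val < i + c) ∨
        (i + c ≤ x.val ∧ x.val < i + c + b) ∨
        (i + c + b ≤ x.val ∧ x.val < i + a + b + c)) with hx | hx | hx | hx | hx
    · rw [hp2, hp1, localPerm_apply_out hkB _ x (by omega), localPerm_apply_out hkL _ x (by omega),
        H0 x (by omega)]
    · rw [hp2, hp1, localPerm_apply_out hkB _ x (by omega), localPerm_apply_out hkL _ x (by omega),
        H0 x (by omega)]
    · -- x in first block of σ' : maps into third block positions of σ
      have hv2 : (p2 x).val = x.val + b := by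
        rw [hp2, localPerm_val_in _ _ _ (by omega) (by omega), rot_val _ _ hB]
        show i + ((x.val - i + b) % (b + c)) = x.val + b
        rw [Nat.mod_eq_of_lt (by omega)]
        omega
      have hv1 : (p1 (p2 x)).val = x.val + a + b := by
        rw [hp1, localPerm_val_in _ _ _ (by omega) (by omega), rot_val _ _ hL]
        show i + (((p2 x).val - i + a) % (a + b + c)) = x.val + a + b
        rw [hv2, Nat.mod_eq_of_lt (by omega)]
        omega
      have hAB : (⟨x.val + a + b, by omega⟩ : Fin k) = p1 (p2 x) := by
        apply Fin.ext
        show x.val + a + b = (p1 (p2 x)).val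
        exact hv1.symm
      rw [H1 x hx.1 hx.2, hAB]
    · -- x in middle block
      have hv2 : (p2 x).val = x.val - c := by
        rw [hp2, localPerm_val_in _ _ _ (by omega) (by omega), rot_val _ _ hB]
        show i + ((x.val - i + b) % (b + c)) = x.val - c
        rw [Nat.mod_eq_sub_mod (by omega), Nat.mod_eq_of_lt (by omega)]
        omega
      have hv1 : (p1 (p2 x)).val = x.val + a - c := by
        rw [hp1, localPerm_val_in _ _ _ (by omega) (by omega), rot_val _ _ hL]
        show i + (((p2 x).val - i + a) % (a + b + c)) = x.val + a - c
        rw [hv2, Nat.mod_eq_of_lt (by omega)]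
        omega
      have hAB : (⟨x.val + a - c, by omega⟩ : Fin k) = p1 (p2 x) := by
        apply Fin.ext
        show x.val + a - c = (p1 (p2 x)).val
        exact hv1.symm
      rw [H2 x hx.1 hx.2, hAB]
    · -- x in last block
      have hv2 : p2 x = x := by
        rw [hp2, localPerm_apply_out _ _ _ (by omega)]
      have hv1 : (p1 (p2 x)).val = x.val - (b + c) := by
        rw [hv2, hp1, localPerm_val_in _ _ _ (by omega) (by omega), rot_val _ _ hL]
        show i + ((x.val - i + a) % (a + b + c)) = x.val - (b + c)
        rw [Nat.mod_eq_sub_mod (by omega), Nat.mod_eq_of_lt (by omega)]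
        omega
      have hAB : (⟨x.val - (b + c), lt_of_le_of_lt (Nat.sub_le _ _) x.isLt⟩ : Fin k) = p1 (p2 x) := by
        apply Fin.ext
        show x.val - (b + c) = (p1 (p2 x)).val
        exact hv1.symm
      rw [H3 x hx.1 hx.2, hAB]
  have hpar : ((-1 : ℤ)) ^ ((a + b + c - 1) * a + (b + c - 1) * b)
      = (-1) ^ (a * (b + c) + b * c) := by
    obtain ⟨a', rfl⟩ := Nat.exists_eq_succ_of_ne_zero ha.ne'
    obtain ⟨c', rfl⟩ := Nat.exists_eq_succ_of_ne_zero hc.ne'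
    apply neg_one_pow_eq_of_even_add
    have hrw : (a' + 1 + b + (c' + 1) - 1) * (a' + 1) + (b + (c' + 1) - 1) * b
        + ((a' + 1) * (b + (c' + 1)) + b * (c' + 1))
        = a' * (a' + 1) + b * (b + 1) + 2 * (a' * b + a' * c' + b * c' + a' + b + c' + 1) := by
      have e1 : a' + 1 + b + (c' + 1) - 1 = a' + b + c' + 1 := by omega
      have e2 : b + (c' + 1) - 1 = b + c' := by omega
      rw [e1, e2]; ring
    rw [hrw]
    exact ((Nat.even_mul_succ_self a').add (Nat.even_mul_succ_self b)).add (even_two_mul _)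
  rw [key, map_mul, map_mul, hp1, hp2, localPerm_sign, localPerm_sign,
    rot_sign _ _ hL, rot_sign _ _ hB]
  push_cast
  rw [mul_assoc, ← pow_add, hpar]
  ring

/-- Swapping two edge-disjoint parallel subtrails `q₁` (positions
`i,…,i+r`) and `q₂` (positions `j,…,j+u`, with `i + r < j`) of an Eulerian trail `σ`,
with `h = j - (i+r+1)` edges strictly between them, yields an Eulerian trail `σ'` with
`sgn(σ') = (-1)^{|q₁|(h+|q₂|)+h|q₂|}·sgn(σ)`, where `|q₁| = r+1`, `|q₂| = u+1`. -/
theorem sign_swap_parallel_subtrails {V : Type*} {k : ℕ} (src tgt : Fin k → V) (s t : V)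
    (σ σ' : Equiv.Perm (Fin k)) (i r j u : ℕ)
    (h1 : i + r < j) (h2 : j + u < k)
    (hEul : IsEulerianTrail src tgt s t σ)
    (hpar1 : src (σ ⟨i, by omega⟩) = src (σ ⟨j, by omega⟩))
    (hpar2 : tgt (σ ⟨i + r, by omega⟩) = tgt (σ ⟨j + u, by omega⟩))
    (hout : ∀ p : Fin k, ((p : ℕ) < i ∨ j + u < (p : ℕ)) → σ' p = σ p)
    (hq2 : ∀ d : ℕ, (hd : d ≤ u) → σ' ⟨i + d, by omega⟩ = σ ⟨j + d, by omega⟩)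
    (hmid : ∀ d : ℕ, (hd : i + r + 1 + d < j) →
      σ' ⟨i + u + 1 + d, by omega⟩ = σ ⟨i + r + 1 + d, by omega⟩)
    (hq1 : ∀ d : ℕ, (hd : d ≤ r) → σ' ⟨j + u - r + d, by omega⟩ = σ ⟨i + d, by omega⟩) :
    (Equiv.Perm.sign σ' : ℤ)
      = (-1) ^ ((r + 1) * ((j - (i + r + 1)) + (u + 1)) + (j - (i + r + 1)) * (u + 1))
        * (Equiv.Perm.sign σ : ℤ) := by
  refine aux_sign_three_blocks σ σ' i (r + 1) (j - (i + r + 1)) (u + 1)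
    (by omega) (by omega) (by omega) ?_ ?_ ?_ ?_
  · intro x hx
    exact hout x (by omega)
  · intro x hx1 hx2
    have h := hq2 (x.val - i) (by omega)
    have ex : (⟨i + (x.val - i), by omega⟩ : Fin k) = x :=
      Fin.ext (show i + (x.val - i) = x.val by omega)
    rw [ex] at h
    rw [h]
    exact congrArg σ (Fin.ext (show j + (x.val - i) = x.val + (r + 1) + (j - (i + r + 1)) by omega))
  · intro x hx1 hx2
    have h := hmid (x.val - (i + u + 1)) (by omega)
    have ex : (⟨i + u + 1 + (x.val - (i + u + 1)), by omega⟩ : Fin k) = x :=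
      Fin.ext (show i + u + 1 + (x.val - (i + u + 1)) = x.val by omega)
    rw [ex] at h
    rw [h]
    exact congrArg σ (Fin.ext (show i + r + 1 + (x.val - (i + u + 1)) = x.val + (r + 1) - (u + 1) by omega))
  · intro x hx1 hx2
    have h := hq1 (x.val - (j + u - r)) (by omega)
    have ex : (⟨j + u - r + (x.val - (j + u - r)), by omega⟩ : Fin k) = x :=
      Fin.ext (show j + u - r + (x.val - (j + u - r)) = x.val by omega)
    rw [ex] at h
    rw [h]
    exact congrArg σ (Fin.ext (show i + (x.val - (j + u - r)) = x.val - (j - (i + r + 1) + (u + 1)) by omega))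

end
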